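/- Bounded second-order path length under the average generalized Minty property: let X = ∏_{r=1}^d Z_r, F an L-Lipschitz operator with block norms bounded by B_F, and suppose the average (α, ℓ, h)-generalized Minty property holds. Run the modified optimistic gradient descent x⁽ᵗ⁾ = Proj_X(x̂⁽ᵗ⁾ − η A(x⁽ᵗ⁻¹⁾)∘F(x⁽ᵗ⁻¹⁾)), x̂⁽ᵗ⁺¹⁾ = Proj_X(x̂⁽ᵗ⁾ − η A(x⁽ᵗ⁾)∘F(x⁽ᵗ⁾)) with η ≤ (1/4)√(ℓ/(h³L² + h B_F² α² d)). Then Σ_{t=1}^T (‖x⁽ᵗ⁾ − x̂⁽ᵗ⁾‖₂² + ‖x⁽ᵗ⁾ − x̂⁽ᵗ⁺¹⁾‖₂²) ≤ 2 D_X² h / ℓ for every T. -/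

import Mathlib

open Finset RealInnerProductSpace

private lemma ogd_aux_vi {E : Type*} [NormedAddCommGroup E] [InnerProductSpace ℝ E]
    {X : Set E} (hXc : Convex ℝ X) {proj : E → E}
    (hproj : ∀ v, proj v ∈ X ∧ ∀ y ∈ X, ‖v - proj v‖ ≤ ‖v - y‖) (v : E) {y : E} (hy : y ∈ X) :
    ⟪v - proj v, y - proj v⟫ ≤ 0 := by
  haveI : Nonempty X := ⟨⟨proj v, (hproj v).1⟩⟩
  have heq : ‖v - proj v‖ = ⨅ z : X, ‖v - z‖ :=
    le_antisymm (le_ciInf fun z => (hproj v).2 z z.2)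
      (ciInf_le ⟨0, by rintro _ ⟨z, rfl⟩; exact norm_nonneg _⟩ (⟨proj v, (hproj v).1⟩ : X))
  exact (norm_eq_iInf_iff_real_inner_le_zero hXc (hproj v).1).mp heq y hy

private lemma ogd_aux_nonexp {E : Type*} [NormedAddCommGroup E] [InnerProductSpace ℝ E]
    {X : Set E} (hXc : Convex ℝ X) {proj : E → E}
    (hproj : ∀ v, proj v ∈ X ∧ ∀ y ∈ X, ‖v - proj v‖ ≤ ‖v - y‖) (v v' : E) :
    ‖proj v - proj v'‖ ≤ ‖v - v'‖ := by
  have h1 := ogd_aux_vi hXc hproj v (hproj v').1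
  have h2 := ogd_aux_vi hXc hproj v' (hproj v).1
  have hac : 0 ≤ ⟪v - proj v, proj v - proj v'⟫ := by
    have h1' : ⟪v - proj v, -(proj v - proj v')⟫ ≤ 0 := by
      rw [neg_sub]; exact h1
    rw [inner_neg_right] at h1'
    linarith
  have key : ⟪v - v', proj v - proj v'⟫ - ⟪proj v - proj v', proj v - proj v'⟫
      = ⟪v - proj v, proj v - proj v'⟫ - ⟪v' - proj v', proj v - proj v'⟫ := by
    simp only [inner_sub_left]; ring
  have hineq : ⟪proj v - proj v', proj v - proj v'⟫ ≤ ⟪v - v', proj v - proj v'⟫ := by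
    linarith
  have hCS : ⟪v - v', proj v - proj v'⟫ ≤ ‖v - v'‖ * ‖proj v - proj v'‖ := real_inner_le_norm _ _
  have hcc : ⟪proj v - proj v', proj v - proj v'⟫ = ‖proj v - proj v'‖ ^ 2 :=
    real_inner_self_eq_norm_sq _
  rcases le_or_gt ‖proj v - proj v'‖ 0 with hc0 | hc0
  · exact le_trans hc0 (norm_nonneg _)
  · have : ‖proj v - proj v'‖ * ‖proj v - proj v'‖ ≤ ‖v - v'‖ * ‖proj v - proj v'‖ := by
      nlinarith
    exact le_of_mul_le_mul_right this hc0

private lemma ogd_sq_combo {c1 c2 e f hb ab : ℝ} (h1 : c1^2 ≤ hb^2) (h2 : c2^2 ≤ ab^2) :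
    (c1*e + c2*f)^2 ≤ 2*hb^2*e^2 + 2*ab^2*f^2 := by
  nlinarith [sq_nonneg (c1*e - c2*f), sq_nonneg e, sq_nonneg f]

private lemma ogd_wbound {W hb yz ayz : ℝ} (hW0 : 0 ≤ W) (hWh : W ≤ hb) (hle : yz ≤ ayz)
    (h0 : 0 ≤ ayz) : W * yz ≤ hb * ayz := by nlinarith

private lemma ogd_sq_le_of_sqrt_le {s BF : ℝ} (hs : 0 ≤ s) (hle : Real.sqrt s ≤ BF) :
    s ≤ BF^2 := by nlinarith [Real.sq_sqrt hs, Real.sqrt_nonneg s]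

private lemma ogd_tri_sq {n A B : ℝ} (hle : n ≤ A + B) (hn : 0 ≤ n) :
    n^2 ≤ 2*A^2 + 2*B^2 := by nlinarith [sq_nonneg (A - B)]

private lemma ogd_final_cross {η hb K G P ℓ : ℝ} (hcond : 16*η^2*(hb*K) ≤ ℓ)
    (hGP : 0 ≤ G + P) : η^2*hb*(2*K*(2*G+2*P)) ≤ (ℓ/4)*(G+P) := by
  nlinarith [mul_nonneg (show (0:ℝ) ≤ ℓ - 16*η^2*(hb*K) by linarith) hGP]

private lemma ogd_block_vi {d m : ℕ} {Z : Fin d → Set (Fin m → ℝ)}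
    {X : Set (EuclideanSpace ℝ (Fin d × Fin m))}
    (hX : X = {x | ∀ r : Fin d, (fun j => x (r, j)) ∈ Z r})
    (hXc : Convex ℝ X) {proj : EuclideanSpace ℝ (Fin d × Fin m) → EuclideanSpace ℝ (Fin d × Fin m)}
    (hproj : ∀ v, proj v ∈ X ∧ ∀ y ∈ X, ‖v - proj v‖ ≤ ‖v - y‖)
    (v : EuclideanSpace ℝ (Fin d × Fin m)) {y : EuclideanSpace ℝ (Fin d × Fin m)}
    (hy : y ∈ X) (r : Fin d) :
    ∑ j : Fin m, (v (r, j) - proj v (r, j)) * (y (r, j) - proj v (r, j)) ≤ 0 := by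
  classical
  set y' : EuclideanSpace ℝ (Fin d × Fin m) := WithLp.toLp 2 (fun p => if p.1 = r then y p else proj v p)
    with hy'def
  have hy'X : y' ∈ X := by
    rw [hX]
    intro r'
    by_cases hr : r' = r
    · subst hr
      have e : (fun j => y' (r', j)) = fun j => y (r', j) := by
        funext j; simp [hy'def]
      rw [e]
      exact (hX ▸ hy) r'
    · have e : (fun j => y' (r', j)) = fun j => proj v (r', j) := by
        funext j; simp [hy'def, hr]
      rw [e]
      exact (hX ▸ (hproj v).1) r'
  have hvi := ogd_aux_vi hXc hproj v hy'X
  rw [PiLp.inner_apply] at hvi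
  simp only [RCLike.inner_apply, conj_trivial, PiLp.sub_apply] at hvi
  have hsplit : ∑ j : Fin m, (v (r, j) - proj v (r, j)) * (y (r, j) - proj v (r, j))
      = ∑ p : Fin d × Fin m, (v p - proj v p) * (y' p - proj v p) := by
    rw [Fintype.sum_prod_type,
      Finset.sum_eq_single_of_mem r (Finset.mem_univ r)
        (fun r' _ hne => Finset.sum_eq_zero fun j _ => by simp [hy'def, hne])]
    exact Finset.sum_congr rfl fun j _ => by simp [hy'def]
  rw [hsplit]
  simpa only [mul_comm] using hvi

private lemma ogd_step_alg {ι : Type*} [Fintype ι] (Wt H H' X1 s U U' : ι → ℝ) (η C : ℝ)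
    (hA : ∑ p, Wt p * ((H p - η * U p - H' p) * (s p - H' p)) ≤ 0)
    (hB : ∑ p, Wt p * ((H p - η * U' p - X1 p) * (H' p - X1 p)) ≤ 0)
    (hC : η * ∑ p, Wt p * ((U p - U' p) * (X1 p - H' p)) ≤ C) :
    η * ∑ p, Wt p * ((X1 p - s p) * U p) ≤
      (1/2) * (∑ p, Wt p * (H p - s p) ^ 2) - (1/2) * (∑ p, Wt p * (H' p - s p) ^ 2)
      - (1/2) * (∑ p, Wt p * (X1 p - H p) ^ 2) - (1/2) * (∑ p, Wt p * (X1 p - H' p) ^ 2)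
      + C := by
  have expand : ∀ p, η * (Wt p * ((X1 p - s p) * U p))
      = Wt p * ((H p - η * U p - H' p) * (s p - H' p))
      + Wt p * ((H p - η * U' p - X1 p) * (H' p - X1 p))
      + ((1/2) * (Wt p * (H p - s p) ^ 2) - (1/2) * (Wt p * (H' p - s p) ^ 2)
         - (1/2) * (Wt p * (X1 p - H p) ^ 2) - (1/2) * (Wt p * (X1 p - H' p) ^ 2))
      + η * (Wt p * ((U p - U' p) * (X1 p - H' p))) := fun p => by ring
  have e1 : η * ∑ p, Wt p * ((X1 p - s p) * U p)
      = ∑ p, η * (Wt p * ((X1 p - s p) * U p)) := by rw [Finset.mul_sum]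
  rw [e1, Finset.sum_congr rfl fun p _ => expand p]
  rw [Finset.sum_add_distrib, Finset.sum_add_distrib, Finset.sum_add_distrib,
    Finset.sum_sub_distrib, Finset.sum_sub_distrib, Finset.sum_sub_distrib,
    ← Finset.mul_sum, ← Finset.mul_sum, ← Finset.mul_sum, ← Finset.mul_sum, ← Finset.mul_sum]
  linarith

set_option maxHeartbeats 1600000

/-- Bounded second-order path length for modified optimistic gradient descent under the
average `(α, ℓ, h)`-generalized Minty property on `X = ∏_{r=1}^d Z_r`:
`Σ_{t=1}^T (‖x⁽ᵗ⁾ − x̂⁽ᵗ⁾‖² + ‖x⁽ᵗ⁾ − x̂⁽ᵗ⁺¹⁾‖²) ≤ 2 D_X² h / ℓ`. -/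
theorem ogd_bounded_path_length {d m : ℕ}
    (Z : Fin d → Set (Fin m → ℝ))
    (X : Set (EuclideanSpace ℝ (Fin d × Fin m)))
    (hX : X = {x | ∀ r : Fin d, (fun j => x (r, j)) ∈ Z r})
    (hXc : Convex ℝ X) (hXk : IsCompact X)
    (F : EuclideanSpace ℝ (Fin d × Fin m) → EuclideanSpace ℝ (Fin d × Fin m))
    (L BF : ℝ) (hL : ∀ x y, ‖F x - F y‖ ≤ L * ‖x - y‖)
    (hBF : ∀ x ∈ X, ∀ r : Fin d, Real.sqrt (∑ j, (F x (r, j)) ^ 2) ≤ BF)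
    (a w : Fin d → EuclideanSpace ℝ (Fin d × Fin m) → ℝ)
    (α ℓ h : ℝ) (hℓ : 0 < ℓ)
    (haLip : ∀ r x y, |a r x - a r y| ≤ α * ‖x - y‖)
    (hab : ∀ r, ∀ x ∈ X, ℓ ≤ a r x ∧ a r x ≤ h)
    (hwb : ∀ r, ∀ x ∈ X, ℓ ≤ w r x ∧ w r x ≤ h)
    (hMinty : ∀ (T : ℕ) (xs : Fin T → EuclideanSpace ℝ (Fin d × Fin m)),
      (∀ t, xs t ∈ X) → ∃ xstar ∈ X,
        0 ≤ ∑ t, ∑ p : Fin d × Fin m,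
              (xs t p - xstar p) * (F (xs t) p * a p.1 (xs t) * w p.1 xstar))
    (η D : ℝ) (hη : 0 < η)
    (hηle : η ≤ (1 / 4) * Real.sqrt (ℓ / (h ^ 3 * L ^ 2 + h * BF ^ 2 * α ^ 2 * d)))
    (hD : ∀ x ∈ X, ∀ y ∈ X, ‖x - y‖ ≤ D)
    (proj : EuclideanSpace ℝ (Fin d × Fin m) → EuclideanSpace ℝ (Fin d × Fin m))
    (hproj : ∀ v, proj v ∈ X ∧ ∀ y ∈ X, ‖v - proj v‖ ≤ ‖v - y‖)
    (u x xh : ℕ → EuclideanSpace ℝ (Fin d × Fin m))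
    (hu : ∀ t, ∀ p : Fin d × Fin m, u t p = a p.1 (x t) * F (x t) p)
    (hx0 : x 0 ∈ X) (hinit : xh 1 = x 0)
    (hxup : ∀ t, 1 ≤ t → x t = proj (xh t - η • u (t - 1)))
    (hxhup : ∀ t, 1 ≤ t → xh (t + 1) = proj (xh t - η • u t))
    (T : ℕ) :
    ∑ t ∈ Finset.Icc 1 T, (‖x t - xh t‖ ^ 2 + ‖x t - xh (t + 1)‖ ^ 2) ≤
      2 * D ^ 2 * h / ℓ := by
  classical
  -- norms as sums of squares
  have normsq : ∀ z : EuclideanSpace ℝ (Fin d × Fin m), ‖z‖ ^ 2 = ∑ p, (z p) ^ 2 := by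
    intro z
    rw [EuclideanSpace.norm_eq, Real.sq_sqrt (Finset.sum_nonneg fun p _ => sq_nonneg _)]
    exact Finset.sum_congr rfl fun p _ => by rw [Real.norm_eq_abs, sq_abs]
  -- positivity of the denominator
  have hQpos : 0 < h ^ 3 * L ^ 2 + h * BF ^ 2 * α ^ 2 * d := by
    by_contra hQ
    push_neg at hQ
    have h0 : ℓ / (h ^ 3 * L ^ 2 + h * BF ^ 2 * α ^ 2 * d) ≤ 0 := by
      rcases lt_or_eq_of_le hQ with h' | h'
      · exact le_of_lt (div_neg_of_pos_of_neg hℓ h')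
      · simp [h']
    have hs0 : Real.sqrt (ℓ / (h ^ 3 * L ^ 2 + h * BF ^ 2 * α ^ 2 * d)) = 0 :=
      Real.sqrt_eq_zero'.mpr (le_trans h0 (le_refl 0))
    rw [hs0] at hηle
    linarith
  have hη2 : 16 * η ^ 2 * (h ^ 3 * L ^ 2 + h * BF ^ 2 * α ^ 2 * d) ≤ ℓ := by
    have h1 : η ^ 2 ≤ ((1/4) * Real.sqrt (ℓ / (h ^ 3 * L ^ 2 + h * BF ^ 2 * α ^ 2 * d))) ^ 2 :=
      pow_le_pow_left₀ hη.le hηle 2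
    have h2 : ((1/4) * Real.sqrt (ℓ / (h ^ 3 * L ^ 2 + h * BF ^ 2 * α ^ 2 * d))) ^ 2
        = (1/16) * (ℓ / (h ^ 3 * L ^ 2 + h * BF ^ 2 * α ^ 2 * d)) := by
      rw [mul_pow, Real.sq_sqrt (div_nonneg hℓ.le hQpos.le)]; norm_num
    rw [h2] at h1
    have h4 : 16 * η ^ 2 ≤ ℓ / (h ^ 3 * L ^ 2 + h * BF ^ 2 * α ^ 2 * d) := by linarith
    have h5 := (le_div_iff₀ hQpos).mp h4
    linarith
  have hKnn : (0:ℝ) ≤ h ^ 2 * L ^ 2 + BF ^ 2 * α ^ 2 * d := by positivity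
  have hh : 0 < h := by nlinarith [hQpos, hKnn]
  -- memberships
  have hxX : ∀ i : ℕ, x i ∈ X := by
    intro i
    cases i with
    | zero => exact hx0
    | succ n => rw [hxup (n+1) (Nat.le_add_left 1 n)]; exact (hproj _).1
  have hxhX : ∀ i : ℕ, xh (i+1) ∈ X := by
    intro i
    cases i with
    | zero => rw [hinit]; exact hx0
    | succ n => rw [hxhup (n+1) (Nat.le_add_left 1 n)]; exact (hproj _).1
  -- Minty point
  obtain ⟨xstar, hsX, hMs⟩ := hMinty T (fun t => x (t + 1)) (fun t => hxX _)
  have hWl : ∀ r, ℓ ≤ w r xstar := fun r => (hwb r xstar hsX).1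
  have hWh : ∀ r, w r xstar ≤ h := fun r => (hwb r xstar hsX).2
  have hWnn : ∀ r, 0 ≤ w r xstar := fun r => le_trans hℓ.le (hWl r)
  -- weighted variational inequality
  have wvi : ∀ (v : EuclideanSpace ℝ (Fin d × Fin m)), ∀ y ∈ X,
      ∑ p : Fin d × Fin m, w p.1 xstar * ((v p - proj v p) * (y p - proj v p)) ≤ 0 := by
    intro v y hy
    rw [Fintype.sum_prod_type]
    refine Finset.sum_nonpos fun r _ => ?_
    have e : ∑ j : Fin m, w (r, j).1 xstar * ((v (r,j) - proj v (r,j)) * (y (r,j) - proj v (r,j)))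
        = w r xstar * ∑ j : Fin m, (v (r,j) - proj v (r,j)) * (y (r,j) - proj v (r,j)) := by
      rw [Finset.mul_sum]
    rw [e]
    exact mul_nonpos_iff.mpr (Or.inl ⟨hWnn r, ogd_block_vi hX hXc hproj v hy r⟩)
  -- update equations in convenient form
  have hxpe : ∀ i : ℕ, x (i+1) = proj (xh (i+1) - η • u i) := by
    intro i
    have := hxup (i+1) (Nat.le_add_left 1 i)
    simpa using this
  have hxhe : ∀ i : ℕ, xh (i+1+1) = proj (xh (i+1) - η • u (i+1)) :=
    fun i => hxhup (i+1) (Nat.le_add_left 1 i)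
  -- per-step inequality
  have step : ∀ i : ℕ,
      η * ∑ p : Fin d × Fin m, w p.1 xstar * ((x (i+1) p - xstar p) * u (i+1) p) ≤
        (1/2) * (∑ p : Fin d × Fin m, w p.1 xstar * (xh (i+1) p - xstar p) ^ 2)
        - (1/2) * (∑ p : Fin d × Fin m, w p.1 xstar * (xh (i+1+1) p - xstar p) ^ 2)
        - (1/2) * (∑ p : Fin d × Fin m, w p.1 xstar * (x (i+1) p - xh (i+1) p) ^ 2)
        - (1/2) * (∑ p : Fin d × Fin m, w p.1 xstar * (x (i+1) p - xh (i+1+1) p) ^ 2)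
        + (ℓ/4) * (‖x (i+1) - xh (i+1)‖ ^ 2 + ‖x i - xh (i+1)‖ ^ 2) := by
    intro i
    refine ogd_step_alg (fun p => w p.1 xstar) (fun p => xh (i+1) p) (fun p => xh (i+1+1) p)
        (fun p => x (i+1) p) (fun p => xstar p) (fun p => u (i+1) p) (fun p => u i p)
        η ((ℓ/4) * (‖x (i+1) - xh (i+1)‖ ^ 2 + ‖x i - xh (i+1)‖ ^ 2)) ?_ ?_ ?_
    · -- (A): optimality of xh(i+2)
      have hv := wvi (xh (i+1) - η • u (i+1)) xstar hsX
      rw [← hxhe i] at hv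
      refine le_trans (le_of_eq (Finset.sum_congr rfl fun p _ => ?_)) hv
      simp [PiLp.sub_apply, PiLp.smul_apply, smul_eq_mul]
    · -- (B): optimality of x(i+1)
      have hv := wvi (xh (i+1) - η • u i) (xh (i+1+1)) (hxhX (i+1))
      rw [← hxpe i] at hv
      refine le_trans (le_of_eq (Finset.sum_congr rfl fun p _ => ?_)) hv
      simp [PiLp.sub_apply, PiLp.smul_apply, smul_eq_mul]
    · -- cross term bound
      show η * ∑ p : Fin d × Fin m,
          w p.1 xstar * ((u (i+1) p - u i p) * (x (i+1) p - xh (i+1+1) p)) ≤ _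
      have hCS : ∑ p : Fin d × Fin m,
          w p.1 xstar * ((u (i+1) p - u i p) * (x (i+1) p - xh (i+1+1) p))
          ≤ h * (‖u (i+1) - u i‖ * ‖x (i+1) - xh (i+1+1)‖) := by
        have step1 : ∀ p : Fin d × Fin m,
            w p.1 xstar * ((u (i+1) p - u i p) * (x (i+1) p - xh (i+1+1) p))
            ≤ h * (|u (i+1) p - u i p| * |x (i+1) p - xh (i+1+1) p|) := by
          intro p
          have t1 : (u (i+1) p - u i p) * (x (i+1) p - xh (i+1+1) p)
              ≤ |u (i+1) p - u i p| * |x (i+1) p - xh (i+1+1) p| := by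
            rw [← abs_mul]; exact le_abs_self _
          exact ogd_wbound (hWnn p.1) (hWh p.1) t1
            (mul_nonneg (abs_nonneg _) (abs_nonneg _))
        refine le_trans (Finset.sum_le_sum fun p _ => step1 p) ?_
        rw [← Finset.mul_sum]
        refine mul_le_mul_of_nonneg_left ?_ hh.le
        have hcs := Finset.sum_mul_sq_le_sq_mul_sq Finset.univ
          (fun p : Fin d × Fin m => |u (i+1) p - u i p|)
          (fun p : Fin d × Fin m => |x (i+1) p - xh (i+1+1) p|)
        have hyn : ∑ p : Fin d × Fin m, |u (i+1) p - u i p| ^ 2 = ‖u (i+1) - u i‖ ^ 2 := by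
          rw [normsq]
          exact Finset.sum_congr rfl fun p _ => by rw [sq_abs]; simp [PiLp.sub_apply]
        have hzn : ∑ p : Fin d × Fin m, |x (i+1) p - xh (i+1+1) p| ^ 2
            = ‖x (i+1) - xh (i+1+1)‖ ^ 2 := by
          rw [normsq]
          exact Finset.sum_congr rfl fun p _ => by rw [sq_abs]; simp [PiLp.sub_apply]
        rw [hyn, hzn] at hcs
        have h2 : (0:ℝ) ≤ ‖u (i+1) - u i‖ * ‖x (i+1) - xh (i+1+1)‖ :=
          mul_nonneg (norm_nonneg _) (norm_nonneg _)
        refine le_of_pow_le_pow_left₀ two_ne_zero h2 ?_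
        refine le_trans hcs (le_of_eq ?_)
        ring
      have hnonexp : ‖x (i+1) - xh (i+1+1)‖ ≤ η * ‖u (i+1) - u i‖ := by
        rw [hxpe i, hxhe i]
        refine le_trans (ogd_aux_nonexp hXc hproj _ _) ?_
        have e : (xh (i+1) - η • u i) - (xh (i+1) - η • u (i+1)) = η • (u (i+1) - u i) := by
          rw [smul_sub]; abel
        rw [e, norm_smul, Real.norm_eq_abs, abs_of_nonneg hη.le]
      have hUU : ‖u (i+1) - u i‖ ^ 2
          ≤ 2 * (h^2*L^2 + BF^2*α^2*(d:ℝ)) * ‖x (i+1) - x i‖^2 := by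
        rw [normsq]
        have hpt : ∀ p : Fin d × Fin m, ((u (i+1) - u i) p)^2
            ≤ 2*h^2*(F (x (i+1)) p - F (x i) p)^2
              + 2*(α*‖x (i+1) - x i‖)^2 * (F (x i) p)^2 := by
          intro p
          have e : (u (i+1) - u i) p
              = a p.1 (x (i+1)) * (F (x (i+1)) p - F (x i) p)
                + (a p.1 (x (i+1)) - a p.1 (x i)) * F (x i) p := by
            simp only [PiLp.sub_apply, hu]; ring
          rw [e]
          have h1' : (a p.1 (x (i+1)))^2 ≤ h^2 := by
            have hb := hab p.1 (x (i+1)) (hxX (i+1))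
            exact pow_le_pow_left₀ (le_trans hℓ.le hb.1) hb.2 2
          have h2' : (a p.1 (x (i+1)) - a p.1 (x i))^2 ≤ (α*‖x (i+1) - x i‖)^2 := by
            have h2 := haLip p.1 (x (i+1)) (x i)
            calc (a p.1 (x (i+1)) - a p.1 (x i))^2
                = |a p.1 (x (i+1)) - a p.1 (x i)|^2 := (sq_abs _).symm
              _ ≤ (α*‖x (i+1) - x i‖)^2 := pow_le_pow_left₀ (abs_nonneg _) h2 2
          exact ogd_sq_combo h1' h2'
        refine le_trans (Finset.sum_le_sum fun p _ => hpt p) ?_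
        rw [Finset.sum_add_distrib, ← Finset.mul_sum, ← Finset.mul_sum]
        have hF2 : ∑ p : Fin d × Fin m, (F (x (i+1)) p - F (x i) p)^2
            ≤ (L*‖x (i+1) - x i‖)^2 := by
          have e2 : ∑ p : Fin d × Fin m, (F (x (i+1)) p - F (x i) p)^2
              = ‖F (x (i+1)) - F (x i)‖^2 := by
            rw [normsq]
            exact Finset.sum_congr rfl fun p _ => by simp [PiLp.sub_apply]
          rw [e2]
          exact pow_le_pow_left₀ (norm_nonneg _) (hL _ _) 2
        have hFB : ∑ p : Fin d × Fin m, (F (x i) p)^2 ≤ (d:ℝ)*BF^2 := by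
          rw [Fintype.sum_prod_type]
          have hb : ∀ r : Fin d, ∑ j : Fin m, (F (x i) (r, j))^2 ≤ BF^2 := by
            intro r
            have hs := hBF (x i) (hxX i) r
            have hnn : 0 ≤ ∑ j : Fin m, (F (x i) (r,j))^2 :=
              Finset.sum_nonneg fun j _ => sq_nonneg _
            exact ogd_sq_le_of_sqrt_le hnn hs
          refine le_trans (Finset.sum_le_sum fun r _ => hb r) ?_
          rw [Finset.sum_const, Finset.card_univ, Fintype.card_fin, nsmul_eq_mul]
        have m1 := mul_le_mul_of_nonneg_left hF2 (show (0:ℝ) ≤ 2*h^2 by positivity)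
        have m2 := mul_le_mul_of_nonneg_left hFB
          (show (0:ℝ) ≤ 2*(α*‖x (i+1) - x i‖)^2 by positivity)
        calc 2*h^2*(∑ p : Fin d × Fin m, (F (x (i+1)) p - F (x i) p)^2)
              + 2*(α*‖x (i+1) - x i‖)^2*(∑ p : Fin d × Fin m, (F (x i) p)^2)
            ≤ 2*h^2*((L*‖x (i+1) - x i‖)^2) + 2*(α*‖x (i+1) - x i‖)^2*((d:ℝ)*BF^2) := by
              linarith
          _ = 2 * (h^2*L^2 + BF^2*α^2*(d:ℝ)) * ‖x (i+1) - x i‖^2 := by ring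
      have hnsq : ‖x (i+1) - x i‖^2
          ≤ 2*‖x (i+1) - xh (i+1)‖^2 + 2*‖x i - xh (i+1)‖^2 := by
        have e3 : x (i+1) - x i = (x (i+1) - xh (i+1)) - (x i - xh (i+1)) := by abel
        have h4 : ‖x (i+1) - x i‖ ≤ ‖x (i+1) - xh (i+1)‖ + ‖x i - xh (i+1)‖ := by
          rw [e3]; exact norm_sub_le _ _
        exact ogd_tri_sq h4 (norm_nonneg _)
      have hGP0 : (0:ℝ) ≤ ‖x (i+1) - xh (i+1)‖^2 + ‖x i - xh (i+1)‖^2 := by positivity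
      calc η * ∑ p : Fin d × Fin m,
            w p.1 xstar * ((u (i+1) p - u i p) * (x (i+1) p - xh (i+1+1) p))
          ≤ η * (h * (‖u (i+1) - u i‖ * ‖x (i+1) - xh (i+1+1)‖)) :=
            mul_le_mul_of_nonneg_left hCS hη.le
        _ ≤ η * (h * (‖u (i+1) - u i‖ * (η * ‖u (i+1) - u i‖))) := by
            refine mul_le_mul_of_nonneg_left ?_ hη.le
            exact mul_le_mul_of_nonneg_left
              (mul_le_mul_of_nonneg_left hnonexp (norm_nonneg _)) hh.le
        _ = η^2 * h * ‖u (i+1) - u i‖^2 := by ring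
        _ ≤ η^2 * h * (2 * (h^2*L^2 + BF^2*α^2*(d:ℝ)) * ‖x (i+1) - x i‖^2) := by
            refine mul_le_mul_of_nonneg_left hUU ?_
            positivity
        _ ≤ η^2 * h * (2 * (h^2*L^2 + BF^2*α^2*(d:ℝ))
              * (2*‖x (i+1) - xh (i+1)‖^2 + 2*‖x i - xh (i+1)‖^2)) := by
            refine mul_le_mul_of_nonneg_left ?_ (by positivity)
            refine mul_le_mul_of_nonneg_left hnsq ?_
            linarith [hKnn]
        _ ≤ (ℓ/4) * (‖x (i+1) - xh (i+1)‖^2 + ‖x i - xh (i+1)‖^2) :=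
            ogd_final_cross (by linarith [hη2]) hGP0
  -- Minty inequality in summed form
  have hM0 : 0 ≤ ∑ i ∈ Finset.range T,
      (∑ p : Fin d × Fin m, w p.1 xstar * ((x (i+1) p - xstar p) * u (i+1) p)) := by
    have h0T : 0 ≤ ∑ i ∈ Finset.range T,
        (∑ p : Fin d × Fin m,
          (x (i+1) p - xstar p) * (F (x (i+1)) p * a p.1 (x (i+1)) * w p.1 xstar)) := by
      rw [← Fin.sum_univ_eq_sum_range (fun i => ∑ p : Fin d × Fin m,
        (x (i+1) p - xstar p) * (F (x (i+1)) p * a p.1 (x (i+1)) * w p.1 xstar)) T]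
      exact hMs
    refine le_trans h0T (le_of_eq ?_)
    refine Finset.sum_congr rfl fun i _ => Finset.sum_congr rfl fun p _ => ?_
    rw [hu (i+1) p]; ring
  -- sum the per-step inequalities
  have htel : ∑ i ∈ Finset.range T,
      ((1/2) * (∑ p : Fin d × Fin m, w p.1 xstar * (xh (i+1) p - xstar p) ^ 2)
        - (1/2) * (∑ p : Fin d × Fin m, w p.1 xstar * (xh (i+1+1) p - xstar p) ^ 2))
      = (1/2) * (∑ p : Fin d × Fin m, w p.1 xstar * (xh (0+1) p - xstar p) ^ 2)
        - (1/2) * (∑ p : Fin d × Fin m, w p.1 xstar * (xh (T+1) p - xstar p) ^ 2) :=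
    Finset.sum_range_sub'
      (fun k => (1/2) * (∑ p : Fin d × Fin m, w p.1 xstar * (xh (k+1) p - xstar p) ^ 2)) T
  have hsum : 0 ≤ (1/2) * (∑ p : Fin d × Fin m, w p.1 xstar * (xh (0+1) p - xstar p) ^ 2)
      - (1/2) * (∑ p : Fin d × Fin m, w p.1 xstar * (xh (T+1) p - xstar p) ^ 2)
      - (1/2) * (∑ i ∈ Finset.range T,
          ∑ p : Fin d × Fin m, w p.1 xstar * (x (i+1) p - xh (i+1) p) ^ 2)
      - (1/2) * (∑ i ∈ Finset.range T,
          ∑ p : Fin d × Fin m, w p.1 xstar * (x (i+1) p - xh (i+1+1) p) ^ 2)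
      + (ℓ/4) * ((∑ i ∈ Finset.range T, ‖x (i+1) - xh (i+1)‖ ^ 2)
          + (∑ i ∈ Finset.range T, ‖x i - xh (i+1)‖ ^ 2)) := by
    have h1 : 0 ≤ ∑ i ∈ Finset.range T,
        (η * ∑ p : Fin d × Fin m, w p.1 xstar * ((x (i+1) p - xstar p) * u (i+1) p)) := by
      rw [← Finset.mul_sum]
      exact mul_nonneg hη.le hM0
    have h2 := Finset.sum_le_sum (fun i (_ : i ∈ Finset.range T) => step i)
    have h3 : ∑ i ∈ Finset.range T,
        ((1/2) * (∑ p : Fin d × Fin m, w p.1 xstar * (xh (i+1) p - xstar p) ^ 2)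
        - (1/2) * (∑ p : Fin d × Fin m, w p.1 xstar * (xh (i+1+1) p - xstar p) ^ 2)
        - (1/2) * (∑ p : Fin d × Fin m, w p.1 xstar * (x (i+1) p - xh (i+1) p) ^ 2)
        - (1/2) * (∑ p : Fin d × Fin m, w p.1 xstar * (x (i+1) p - xh (i+1+1) p) ^ 2)
        + (ℓ/4) * (‖x (i+1) - xh (i+1)‖ ^ 2 + ‖x i - xh (i+1)‖ ^ 2))
        = ((1/2) * (∑ p : Fin d × Fin m, w p.1 xstar * (xh (0+1) p - xstar p) ^ 2)
          - (1/2) * (∑ p : Fin d × Fin m, w p.1 xstar * (xh (T+1) p - xstar p) ^ 2))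
        - (1/2) * (∑ i ∈ Finset.range T,
            ∑ p : Fin d × Fin m, w p.1 xstar * (x (i+1) p - xh (i+1) p) ^ 2)
        - (1/2) * (∑ i ∈ Finset.range T,
            ∑ p : Fin d × Fin m, w p.1 xstar * (x (i+1) p - xh (i+1+1) p) ^ 2)
        + (ℓ/4) * ((∑ i ∈ Finset.range T, ‖x (i+1) - xh (i+1)‖ ^ 2)
            + (∑ i ∈ Finset.range T, ‖x i - xh (i+1)‖ ^ 2)) := by
      rw [← htel]
      rw [Finset.sum_add_distrib, Finset.sum_sub_distrib, Finset.sum_sub_distrib,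
        ← Finset.mul_sum, ← Finset.mul_sum, ← Finset.mul_sum, Finset.sum_add_distrib]
    rw [h3] at h2
    linarith
  -- lower bounds for weighted sums by plain sums
  have hWGl : ∀ i : ℕ, ℓ * ‖x (i+1) - xh (i+1)‖ ^ 2
      ≤ ∑ p : Fin d × Fin m, w p.1 xstar * (x (i+1) p - xh (i+1) p) ^ 2 := by
    intro i
    rw [normsq, Finset.mul_sum]
    refine Finset.sum_le_sum fun p _ => ?_
    have e : ((x (i+1) - xh (i+1)) p) ^ 2 = (x (i+1) p - xh (i+1) p) ^ 2 := by
      simp [PiLp.sub_apply]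
    rw [e]
    exact mul_le_mul_of_nonneg_right (hWl p.1) (sq_nonneg _)
  have hWBl : ∀ i : ℕ, ℓ * ‖x (i+1) - xh (i+1+1)‖ ^ 2
      ≤ ∑ p : Fin d × Fin m, w p.1 xstar * (x (i+1) p - xh (i+1+1) p) ^ 2 := by
    intro i
    rw [normsq, Finset.mul_sum]
    refine Finset.sum_le_sum fun p _ => ?_
    have e : ((x (i+1) - xh (i+1+1)) p) ^ 2 = (x (i+1) p - xh (i+1+1) p) ^ 2 := by
      simp [PiLp.sub_apply]
    rw [e]
    exact mul_le_mul_of_nonneg_right (hWl p.1) (sq_nonneg _)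
  have hWGsum : ℓ * (∑ i ∈ Finset.range T, ‖x (i+1) - xh (i+1)‖ ^ 2)
      ≤ ∑ i ∈ Finset.range T, ∑ p : Fin d × Fin m, w p.1 xstar * (x (i+1) p - xh (i+1) p) ^ 2 := by
    rw [Finset.mul_sum]
    exact Finset.sum_le_sum fun i _ => hWGl i
  have hWBsum : ℓ * (∑ i ∈ Finset.range T, ‖x (i+1) - xh (i+1+1)‖ ^ 2)
      ≤ ∑ i ∈ Finset.range T, ∑ p : Fin d × Fin m, w p.1 xstar * (x (i+1) p - xh (i+1+1) p) ^ 2 := by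
    rw [Finset.mul_sum]
    exact Finset.sum_le_sum fun i _ => hWBl i
  have hΦT : 0 ≤ ∑ p : Fin d × Fin m, w p.1 xstar * (xh (T+1) p - xstar p) ^ 2 :=
    Finset.sum_nonneg fun p _ => mul_nonneg (hWnn p.1) (sq_nonneg _)
  have hΦ0 : ∑ p : Fin d × Fin m, w p.1 xstar * (xh (0+1) p - xstar p) ^ 2 ≤ h * D ^ 2 := by
    have e1 : ∑ p : Fin d × Fin m, w p.1 xstar * (xh (0+1) p - xstar p) ^ 2
        ≤ ∑ p : Fin d × Fin m, h * (xh (0+1) p - xstar p) ^ 2 :=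
      Finset.sum_le_sum fun p _ => mul_le_mul_of_nonneg_right (hWh p.1) (sq_nonneg _)
    have e2 : ∑ p : Fin d × Fin m, h * (xh (0+1) p - xstar p) ^ 2 = h * ‖xh (0+1) - xstar‖ ^ 2 := by
      rw [normsq, Finset.mul_sum]
      exact Finset.sum_congr rfl fun p _ => by simp [PiLp.sub_apply]
    have e3 : ‖xh (0+1) - xstar‖ ≤ D := hD (xh (0+1)) (hxhX 0) xstar hsX
    have e4 : ‖xh (0+1) - xstar‖ ^ 2 ≤ D ^ 2 := pow_le_pow_left₀ (norm_nonneg _) e3 2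
    calc ∑ p : Fin d × Fin m, w p.1 xstar * (xh (0+1) p - xstar p) ^ 2
        ≤ h * ‖xh (0+1) - xstar‖ ^ 2 := by rw [← e2]; exact e1
      _ ≤ h * D ^ 2 := mul_le_mul_of_nonneg_left e4 hh.le
  -- shift the P-sum into the B-sum
  have hPsum : ∑ i ∈ Finset.range T, ‖x i - xh (i+1)‖ ^ 2
      ≤ ∑ i ∈ Finset.range T, ‖x (i+1) - xh (i+1+1)‖ ^ 2 := by
    cases T with
    | zero => simp
    | succ n =>
      rw [Finset.sum_range_succ' (fun i => ‖x i - xh (i+1)‖ ^ 2) n]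
      have hz : ‖x 0 - xh (0+1)‖ ^ 2 = 0 := by
        rw [hinit]; simp
      rw [hz, add_zero]
      rw [Finset.sum_range_succ (fun i => ‖x (i+1) - xh (i+1+1)‖ ^ 2) n]
      have : (0:ℝ) ≤ ‖x (n+1) - xh (n+1+1)‖ ^ 2 := sq_nonneg _
      have hle : ∑ i ∈ Finset.range n, ‖x (i+1) - xh (i+1+1)‖ ^ 2
          ≤ ∑ i ∈ Finset.range n, ‖x (i+1) - xh (i+1+1)‖ ^ 2 := le_refl _
      linarith
  have hPscaled := mul_le_mul_of_nonneg_left hPsum hℓ.le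
  -- main bound
  have hmain : ℓ * ((∑ i ∈ Finset.range T, ‖x (i+1) - xh (i+1)‖ ^ 2)
      + (∑ i ∈ Finset.range T, ‖x (i+1) - xh (i+1+1)‖ ^ 2)) ≤ 2 * (h * D ^ 2) := by
    nlinarith [hsum, hΦT, hΦ0, hWGsum, hWBsum, hPscaled, hℓ.le,
      mul_le_mul_of_nonneg_left hPsum (show (0:ℝ) ≤ ℓ/4 by linarith)]
  -- rewrite the goal
  have hIcc : ∀ n : ℕ, ∑ t ∈ Finset.Icc 1 n, (‖x t - xh t‖ ^ 2 + ‖x t - xh (t + 1)‖ ^ 2)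
      = ∑ i ∈ Finset.range n, (‖x (i+1) - xh (i+1)‖ ^ 2 + ‖x (i+1) - xh (i+1+1)‖ ^ 2) := by
    intro n
    induction n with
    | zero => simp
    | succ k ih =>
      rw [Finset.sum_Icc_succ_top (Nat.le_add_left 1 k), ih, Finset.sum_range_succ]
  rw [hIcc T, Finset.sum_add_distrib]
  rw [le_div_iff₀ hℓ]
  linarith [hmain]
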